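/- In the orthogonal setting, if a, b ∈ V satisfy B(a,a) = 0, B(b,b) = 0 and B(a,b) = 0 (i.e. the span of a and b is a singular subspace), then for every X ∈ gl(V)_B one has ⁅D_{a,b}, ⁅D_{a,b}, X⁆⁆ = 2·B(X a, b)·D_{a,b}; in particular, if D_{a,b} ≠ 0 then D_{a,b} is an extremal element of the Lie algebra gl(V)_B. -/
import Mathlib


/-- The endomorphism `D_{a,b} : x ↦ B(x,a)·b − B(x,b)·a` of the orthogonal setting. -/
def DOrth {k V : Type*} [Field k] [AddCommGroup V] [Module k V]
    (B : LinearMap.BilinForm k V) (a b : V) : Module.End k V :=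
  (B.flip a).smulRight b - (B.flip b).smulRight a

/-- In the orthogonal setting, if the span of `a` and `b` is singular
(`B(a,a) = B(b,b) = B(a,b) = 0`), then `⁅D_{a,b}, ⁅D_{a,b}, X⁆⁆ = 2·B(Xa,b)·D_{a,b}`
for every `X ∈ gl(V)_B`; in particular, if `D_{a,b} ≠ 0` then `D_{a,b}` is an extremal
element of `gl(V)_B`. -/
theorem stmt13 {k V : Type*} [Field k] [AddCommGroup V] [Module k V]
    (hchar : (2 : k) ≠ 0)
    (B : LinearMap.BilinForm k V) (hsymm : ∀ u v : V, B u v = B v u)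
    (a b : V) (haa : B a a = 0) (hbb : B b b = 0) (hab : B a b = 0) :
    (∀ X : Module.End k V, (∀ u v : V, B (X u) v = -B u (X v)) →
      ⁅DOrth B a b, ⁅DOrth B a b, X⁆⁆ = (2 * B (X a) b) • DOrth B a b) ∧
    (DOrth B a b ≠ 0 →
      ∀ X : Module.End k V, (∀ u v : V, B (X u) v = -B u (X v)) →
        ⁅DOrth B a b, ⁅DOrth B a b, X⁆⁆ ∈
          Submodule.span k ({DOrth B a b} : Set (Module.End k V))) := by
  have main : ∀ X : Module.End k V, (∀ u v : V, B (X u) v = -B u (X v)) →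
      ⁅DOrth B a b, ⁅DOrth B a b, X⁆⁆ = (2 * B (X a) b) • DOrth B a b := by
    intro X hX
    have hba : B b a = 0 := (hsymm b a).trans hab
    have hXaa : B (X a) a = 0 := by
      have h := hX a a
      rw [hsymm a (X a)] at h
      have : (2 : k) * B (X a) a = 0 := by linear_combination h
      exact (mul_eq_zero.1 this).resolve_left hchar
    have hXbb : B (X b) b = 0 := by
      have h := hX b b
      rw [hsymm b (X b)] at h
      have : (2 : k) * B (X b) b = 0 := by linear_combination h
      exact (mul_eq_zero.1 this).resolve_left hchar
    have hXba : B (X b) a = - B (X a) b := by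
      have h := hX b a
      rw [hsymm b (X a)] at h
      linear_combination h
    have hflip : ∀ u v : V, B.flip u v = B v u := fun _ _ => rfl
    ext x
    simp only [LieRing.of_associative_ring_bracket, DOrth, LinearMap.sub_apply,
      Module.End.mul_apply, LinearMap.smulRight_apply, LinearMap.flip_apply,
      LinearMap.smul_apply, map_sub, map_smul, LinearMap.sub_apply, smul_sub,
      LinearMap.map_smul, smul_eq_mul]
    simp only [hflip, haa, hbb, hab, hba, hXaa, hXbb, hXba, smul_smul]
    module
  refine ⟨main, fun _ X hX => ?_⟩
  rw [main X hX]
  exact Submodule.smul_mem _ _ (Submodule.mem_span_singleton_self _)
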